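/- Let A ≅ ℝ^l act linearly on a finite-dimensional real vector space W as a direct sum of one-dimensional real weight spaces with weights χ_j. Then the set S_A({0}) = { z ∈ W : 0 ∈ closure(A·z) } is a finite union of linear subspaces of W. -/

import Mathlib

open Filter Topology

/-- For a diagonal linear action of `A ≅ ℝ^l` on `W = ⊕ W_{χ_j}`,
the saturation `S_A({0}) = { z : 0 ∈ closure(A·z) }` is a finite union of
linear subspaces of `W`. -/
theorem stmt3
    (a : Type*) [AddCommGroup a] [Module ℝ a]
    (ι : Type*) [Fintype ι]
    (W : ι → Type*) [∀ j, NormedAddCommGroup (W j)] [∀ j, NormedSpace ℝ (W j)]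
    (χ : ι → (a →ₗ[ℝ] ℝ)) :
    ∃ (n : ℕ) (V : Fin n → Submodule ℝ (∀ j, W j)),
      {z : ∀ j, W j | (0 : ∀ j, W j) ∈
        closure {w : ∀ j, W j | ∃ ξ : a, w = fun j => Real.exp (χ j ξ) • z j}} =
      ⋃ i, (V i : Set (∀ j, W j)) := by
  classical
  let e := Fintype.equivFin (Finset ι)
  refine ⟨Fintype.card (Finset ι), fun i =>
    if ∃ ξ : a, ∀ j ∈ e.symm i, χ j ξ < 0
    then Submodule.pi ((↑(e.symm i) : Set ι)ᶜ) (fun _ => ⊥)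
    else ⊥, ?_⟩
  ext z
  simp only [Set.mem_iUnion, SetLike.mem_coe, Set.mem_setOf_eq]
  constructor
  · intro hz
    set J : Finset ι := Finset.univ.filter (fun j => z j ≠ 0) with hJ
    have hgood : ∃ ξ : a, ∀ j ∈ J, χ j ξ < 0 := by
      by_cases hne : J.Nonempty
      · have hε : 0 < J.inf' hne (fun j => ‖z j‖) := by
          rw [Finset.lt_inf'_iff]
          intro j hj
          have hzj : z j ≠ 0 := (Finset.mem_filter.mp hj).2
          simpa using hzj
        rw [Metric.mem_closure_iff] at hz
        obtain ⟨w, ⟨ξ, rfl⟩, hw⟩ := hz _ hε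
        refine ⟨ξ, fun j hj => ?_⟩
        have hzj : z j ≠ 0 := (Finset.mem_filter.mp hj).2
        rw [dist_pi_lt_iff hε] at hw
        have h2 := hw j
        rw [dist_comm, Pi.zero_apply, dist_zero_right, norm_smul, Real.norm_eq_abs,
          abs_of_pos (Real.exp_pos _)] at h2
        have hle : J.inf' hne (fun j => ‖z j‖) ≤ ‖z j‖ :=
          Finset.inf'_le _ hj
        have hnorm : 0 < ‖z j‖ := by simpa using hzj
        have : Real.exp (χ j ξ) * ‖z j‖ < ‖z j‖ := lt_of_lt_of_le h2 hle
        have hexp : Real.exp (χ j ξ) < 1 := by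
          by_contra h
          push_neg at h
          nlinarith
        exact Real.exp_lt_one_iff.mp hexp
      · exact ⟨0, fun j hj => absurd ⟨j, hj⟩ hne⟩
    refine ⟨e J, ?_⟩
    rw [Equiv.symm_apply_apply, if_pos hgood]
    intro j hj
    have hzj : z j = 0 := by
      by_contra h
      exact hj (by simp [hJ, h])
    simpa using hzj
  · rintro ⟨i, hi⟩
    by_cases hgood : ∃ ξ : a, ∀ j ∈ e.symm i, χ j ξ < 0
    · rw [if_pos hgood] at hi
      obtain ⟨ξ, hξ⟩ := hgood
      have hz0 : ∀ j ∉ e.symm i, z j = 0 := by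
        intro j hj
        have := hi j (by simpa using hj)
        simpa using this
      have htend : Tendsto (fun n : ℕ =>
          (fun j => Real.exp (χ j ((n : ℕ) • ξ)) • z j : ∀ j, W j)) atTop
          (𝓝 0) := by
        rw [tendsto_pi_nhds]
        intro j
        by_cases hj : j ∈ e.symm i
        · have hc : χ j ξ < 0 := hξ j hj
          have h1 : Tendsto (fun n : ℕ => (n : ℝ) * χ j ξ) atTop atBot :=
            (tendsto_natCast_atTop_atTop (R := ℝ)).atTop_mul_const_of_neg hc
          have h2 : Tendsto (fun n : ℕ => Real.exp ((n : ℝ) * χ j ξ)) atTop (𝓝 0) :=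
            Real.tendsto_exp_atBot.comp h1
          have h3 := h2.smul_const (z j)
          rw [zero_smul] at h3
          convert h3 using 2 with n
          congr 1
          rw [map_nsmul, nsmul_eq_mul]
          rfl
        · simp only [hz0 j hj, smul_zero]
          exact tendsto_const_nhds
      exact mem_closure_of_tendsto htend
        (Eventually.of_forall fun n => ⟨(n : ℕ) • ξ, rfl⟩)
    · rw [if_neg hgood] at hi
      have hz : z = 0 := by simpa using hi
      apply subset_closure
      exact ⟨0, by funext j; simp [hz]⟩
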